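/- Let Δ > 0, η ≥ 2, and h_η(q) = Δ²((η+2−2q)³ − (η+2−4q)³)/6. For 2 ≤ η < 8/3, define H(q) = h_η(q) for q ∈ [0, (9η+4)/28] and H(q) = (h_η(1) − h_η((9η+4)/28))/(1 − (9η+4)/28) · (q − (9η+4)/28) + h_η((9η+4)/28) for q ∈ [(9η+4)/28, 1]. Then H is concave on [0,1] and H(q) ≥ h_η(q) for all q ∈ [0,1]. -/

import Mathlib

theorem stmt_17 (Δ η : ℝ) (hΔ : 0 < Δ) (hη₁ : 2 ≤ η) (hη₂ : η < 8 / 3)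
    (h H : ℝ → ℝ)
    (hh : ∀ q, h q = Δ ^ 2 * ((η + 2 - 2 * q) ^ 3 - (η + 2 - 4 * q) ^ 3) / 6)
    (hH : ∀ q, H q =
      if q ≤ (9 * η + 4) / 28 then h q
      else (h 1 - h ((9 * η + 4) / 28)) / (1 - (9 * η + 4) / 28)
            * (q - (9 * η + 4) / 28) + h ((9 * η + 4) / 28)) :
    ConcaveOn ℝ (Set.Icc (0 : ℝ) 1) H ∧
    ∀ q ∈ Set.Icc (0 : ℝ) 1, h q ≤ H q := by
  set t : ℝ := (9 * η + 4) / 28 with htdef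
  have ht1 : t < 1 := by rw [htdef]; linarith
  have ht0 : 0 < t := by rw [htdef]; linarith
  have h1t : (0:ℝ) < 1 - t := by linarith
  set m : ℝ := (h 1 - h t) / (1 - t) with hmdef
  have hm : m = Δ ^ 2 * ((η + 2) ^ 2 - 12 * (η + 2) * t + 28 * t ^ 2) := by
    rw [hmdef, hh, hh, htdef, div_eq_iff (by linarith : (1:ℝ) - (9 * η + 4) / 28 ≠ 0)]
    ring
  have hkey : ∀ q, h q = m * (q - t) + h t + 28 * Δ ^ 2 / 3 * (q - t) ^ 2 * (q - 1) := by
    intro q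
    rw [hh, hh, hm, htdef]
    ring
  have hDh : ∀ x : ℝ, HasDerivAt h (Δ ^ 2 * ((η + 2) ^ 2 - 12 * (η + 2) * x + 28 * x ^ 2)) x := by
    intro x
    have e : h = fun q => Δ ^ 2 * ((η + 2 - 2 * q) ^ 3 - (η + 2 - 4 * q) ^ 3) / 6 :=
      funext hh
    rw [e]
    have d1 : HasDerivAt (fun q : ℝ => η + 2 - 2 * q) (-2) x := by
      simpa using ((hasDerivAt_id x).const_mul (2:ℝ)).const_sub (η + 2)
    have d2 : HasDerivAt (fun q : ℝ => η + 2 - 4 * q) (-4) x := by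
      simpa using ((hasDerivAt_id x).const_mul (4:ℝ)).const_sub (η + 2)
    have hd := (((d1.fun_pow 3).sub (d2.fun_pow 3)).const_mul (Δ ^ 2)).div_const 6
    refine hd.congr_deriv ?_
    norm_num
    ring
  have hDline : ∀ x : ℝ, HasDerivAt (fun q => m * (q - t) + h t) m x := by
    intro x
    simpa using (((hasDerivAt_id x).sub_const t).const_mul m).add_const (h t)
  have hH1 : ∀ q ∈ Set.Iic t, H q = h q := by
    intro q hq
    rw [hH]
    exact if_pos hq
  have hH2 : ∀ q ∈ Set.Ici t, H q = m * (q - t) + h t := by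
    intro q hq
    rcases eq_or_lt_of_le (Set.mem_Ici.mp hq) with hq' | hq'
    · rw [hH, if_pos hq'.ge, ← hq']
      ring
    · rw [hH, if_neg (not_le.mpr hq'), hmdef]
  set g : ℝ → ℝ := fun x => Δ ^ 2 * ((η + 2) ^ 2 - 12 * (η + 2) * min x t + 28 * (min x t) ^ 2)
    with hgdef
  have hDH : ∀ x : ℝ, HasDerivAt H (g x) x := by
    intro x
    rcases lt_trichotomy x t with hx | hx | hx
    · have hgx : g x = Δ ^ 2 * ((η + 2) ^ 2 - 12 * (η + 2) * x + 28 * x ^ 2) := by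
        simp only [hgdef]
        rw [min_eq_left hx.le]
      rw [hgx]
      refine (hDh x).congr_of_eventuallyEq ?_
      filter_upwards [Iio_mem_nhds hx] with q hq
      exact hH1 q (Set.mem_Iic.mpr (le_of_lt hq))
    · rw [hx]
      have hgt : g t = m := by
        simp only [hgdef, min_self]
        rw [hm]
      rw [hgt]
      have hIic : HasDerivWithinAt H m (Set.Iic t) t := by
        have hd := (hDh t).hasDerivWithinAt (s := Set.Iic t)
        rw [← hm] at hd
        exact hd.congr hH1 (hH1 t Set.self_mem_Iic)
      have hIci : HasDerivWithinAt H m (Set.Ici t) t :=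
        (hDline t).hasDerivWithinAt.congr hH2 (hH2 t Set.self_mem_Ici)
      have hu := hIic.union hIci
      rwa [Set.Iic_union_Ici, hasDerivWithinAt_univ] at hu
    · have hgx : g x = m := by
        simp only [hgdef]
        rw [min_eq_right hx.le, hm]
      rw [hgx]
      refine (hDline x).congr_of_eventuallyEq ?_
      filter_upwards [Ioi_mem_nhds hx] with q hq
      exact hH2 q (Set.mem_Ici.mpr (le_of_lt hq))
  have htb : t ≤ 3 * (η + 2) / 14 := by rw [htdef]; linarith
  have hg_anti : Antitone g := by
    intro x y hxy
    simp only [hgdef]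
    have h1 : min x t ≤ min y t := min_le_min hxy le_rfl
    have h2 : min y t ≤ t := min_le_right _ _
    have h3 : min x t ≤ t := min_le_right _ _
    set u := min x t
    set v := min y t
    have key : (η + 2) ^ 2 - 12 * (η + 2) * v + 28 * v ^ 2 ≤
        (η + 2) ^ 2 - 12 * (η + 2) * u + 28 * u ^ 2 := by
      nlinarith [mul_nonneg (sub_nonneg.mpr h1)
        (by linarith : (0:ℝ) ≤ 12 * (η + 2) - 28 * (u + v))]
    exact mul_le_mul_of_nonneg_left key (sq_nonneg Δ)
  constructor
  · have hdiff : Differentiable ℝ H := fun x => (hDH x).differentiableAt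
    refine AntitoneOn.concaveOn_of_deriv (convex_Icc 0 1)
      hdiff.continuous.continuousOn (hdiff.differentiableOn) ?_
    intro x _ y _ hxy
    rw [(hDH x).deriv, (hDH y).deriv]
    exact hg_anti hxy
  · intro q hq
    rcases le_or_gt q t with hqt | hqt
    · rw [hH1 q hqt]
    · rw [hH2 q hqt.le, hkey q]
      have hle : 28 * Δ ^ 2 / 3 * (q - t) ^ 2 * (q - 1) ≤ 0 := by
        have h1 : q - 1 ≤ 0 := by linarith [hq.2]
        have h2 : (0:ℝ) ≤ 28 * Δ ^ 2 / 3 * (q - t) ^ 2 := by positivity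
        exact mul_nonpos_of_nonneg_of_nonpos h2 h1
      linarith
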